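/- Let K be a commutative integral domain, let Γ be a finitely generated torsion-free abelian group, and let Φ be the convex hull of finitely many group homomorphisms φ₁, …, φ_m : Γ → ℝ. Then the Novikov ring Λ^K_Φ(Γ) is a commutative integral domain. -/

import Mathlib

theorem novikov_key {K : Type*} [CommRing K] [IsDomain K]
    {Γ : Type*} [AddCommGroup Γ] {M : Type*} [AddCommGroup M] [LinearOrder M] [IsOrderedAddMonoid M]
    (e : Γ →+ M) (he : Function.Injective e) (ψ : Γ →+ ℝ)
    (a b : Γ → K)
    (hA : ∀ c : ℝ, {γ : Γ | a γ ≠ 0 ∧ ψ γ < c}.Finite)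
    (hB : ∀ c : ℝ, {γ : Γ | b γ ≠ 0 ∧ ψ γ < c}.Finite)
    (ha : a ≠ 0) (hb : b ≠ 0) :
    ∃ γ : Γ, ∑ᶠ α : Γ, a α * b (γ - α) ≠ 0 := by
  -- find a ψ-minimal, then e-minimal, element of the support of a
  have key : ∀ (f : Γ → K), f ≠ 0 → (∀ c : ℝ, {γ : Γ | f γ ≠ 0 ∧ ψ γ < c}.Finite) →
      ∃ α₀ : Γ, f α₀ ≠ 0 ∧ (∀ x, f x ≠ 0 → ψ α₀ ≤ ψ x) ∧
        (∀ x, f x ≠ 0 → ψ x ≤ ψ α₀ → e α₀ ≤ e x) := by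
    intro f hf hfin
    obtain ⟨a₁, ha₁⟩ : ∃ x, f x ≠ 0 := by
      by_contra h
      push_neg at h
      exact hf (funext fun x => h x)
    -- ψ-minimum
    have hT : {γ : Γ | f γ ≠ 0 ∧ ψ γ < ψ a₁ + 1}.Finite := hfin _
    obtain ⟨α₁, hα₁mem, hα₁min⟩ := Set.exists_min_image _ ψ hT ⟨a₁, ha₁, by linarith⟩
    have hglobal : ∀ x, f x ≠ 0 → ψ α₁ ≤ ψ x := by
      intro x hx
      by_contra h
      push_neg at h
      have hx' : x ∈ {γ : Γ | f γ ≠ 0 ∧ ψ γ < ψ a₁ + 1} :=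
        ⟨hx, lt_of_lt_of_le h (le_trans (hα₁min a₁ ⟨ha₁, by linarith⟩) (by linarith))⟩
      exact absurd (hα₁min x hx') (not_le.mpr h)
    -- e-minimum among ψ-minimizers
    have hA₀ : {γ : Γ | f γ ≠ 0 ∧ ψ γ ≤ ψ α₁}.Finite :=
      (hfin (ψ α₁ + 1)).subset fun x ⟨hx1, hx2⟩ => ⟨hx1, by linarith⟩
    obtain ⟨α₀, hα₀mem, hα₀min⟩ := Set.exists_min_image _ e hA₀ ⟨α₁, hα₁mem.1, le_refl _⟩
    refine ⟨α₀, hα₀mem.1, fun x hx => le_trans ?_ (hglobal x hx), fun x hx hx' => ?_⟩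
    · exact hα₀mem.2
    · exact hα₀min x ⟨hx, le_trans hx' hα₀mem.2⟩
  obtain ⟨α₀, haα₀, hψa, hea⟩ := key a ha hA
  obtain ⟨β₀, hbβ₀, hψb, heb⟩ := key b hb hB
  refine ⟨α₀ + β₀, ?_⟩
  have hsingle : ∀ x, x ≠ α₀ → a x * b (α₀ + β₀ - x) = 0 := by
    intro x hx
    by_contra h
    have hax : a x ≠ 0 := fun h' => h (by rw [h', zero_mul])
    have hbx : b (α₀ + β₀ - x) ≠ 0 := fun h' => h (by rw [h', mul_zero])
    have h1 : ψ α₀ ≤ ψ x := hψa x hax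
    have h2 : ψ β₀ ≤ ψ (α₀ + β₀ - x) := hψb _ hbx
    have hxid : x + (α₀ + β₀ - x) = α₀ + β₀ := by abel
    have hsum : ψ x + ψ (α₀ + β₀ - x) = ψ α₀ + ψ β₀ := by
      rw [← map_add, hxid, map_add]
    have h1' : ψ x ≤ ψ α₀ := by linarith
    have h2' : ψ (α₀ + β₀ - x) ≤ ψ β₀ := by linarith
    have e1 : e α₀ ≤ e x := hea x hax h1'
    have e2 : e β₀ ≤ e (α₀ + β₀ - x) := heb _ hbx h2'
    have esum : e x + e (α₀ + β₀ - x) = e α₀ + e β₀ := by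
      rw [← map_add, hxid, map_add]
    have : e x = e α₀ := le_antisymm (by
      have := add_le_add_right e2 (e x)
      rw [esum] at this
      exact le_of_add_le_add_right this) e1
    exact hx (he this)
  rw [finsum_eq_single _ α₀ hsingle]
  simpa using mul_ne_zero haα₀ hbβ₀




/-- The underlying set of the Novikov ring `Λ^K_Φ(Γ)` determined by a set `Φ` of
group homomorphisms `Γ → ℝ`: functions `r : Γ → K` satisfying the Novikov
multi-finiteness condition, i.e. for every `φ ∈ Φ` and every `c : ℝ` only finitely
many `γ` with `φ γ < c` have `r γ ≠ 0`. -/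
def NovikovMultiSet (K : Type*) [Zero K] {Γ : Type*} [AddCommGroup Γ]
    (Φ : Set (Γ →+ ℝ)) : Set (Γ → K) :=
  {r | ∀ φ ∈ Φ, ∀ c : ℝ, {γ : Γ | r γ ≠ 0 ∧ φ γ < c}.Finite}

/-- A commutative ring structure on a set `S` of functions `Γ → K` is a Novikov ring
structure if addition is pointwise and multiplication is the convolution product
`(r·s)(γ) = Σ_{α+β=γ} r(α)s(β)`. -/
def IsNovikovRingStructure {K Γ : Type*} [CommRing K] [AddCommGroup Γ]
    (S : Set (Γ → K)) [CommRing ↥S] : Prop :=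
  (∀ a b : ↥S, ∀ γ : Γ, ((a + b : ↥S) : Γ → K) γ = a.1 γ + b.1 γ) ∧
  (∀ a b : ↥S, ∀ γ : Γ, ((a * b : ↥S) : Γ → K) γ = ∑ᶠ α : Γ, a.1 α * b.1 (γ - α))

/-- Let `K` be a commutative integral domain, `Γ` a finitely generated torsion-free
abelian group, and `Φ` the convex hull of finitely many group homomorphisms
`φ₁, …, φ_m : Γ → ℝ`.  Then the Novikov ring `Λ^K_Φ(Γ)` is a commutative integral
domain. -/
theorem novikovRing_polytope_isDomain
    (K : Type*) [CommRing K] [IsDomain K]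
    (Γ : Type*) [AddCommGroup Γ] [AddGroup.FG Γ] (hTF : ∀ g : Γ, g ≠ 0 → ¬IsOfFinAddOrder g)
    (m : ℕ) (φ : Fin m → (Γ →+ ℝ))
    [CommRing ↥(NovikovMultiSet K (convexHull ℝ (Set.range φ)))]
    (hS : IsNovikovRingStructure (NovikovMultiSet K (convexHull ℝ (Set.range φ)))) :
    IsDomain ↥(NovikovMultiSet K (convexHull ℝ (Set.range φ))) := by
  classical
  -- the zero of the ring is the zero function
  have hzero : ((0 : ↥(NovikovMultiSet K (convexHull ℝ (Set.range φ)))) : Γ → K) = 0 := by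
    funext γ
    have h := hS.1 0 0 γ
    rw [add_zero] at h
    exact left_eq_add.mp h
  -- a nonzero element : the delta function at 0
  have hδmem : (fun γ : Γ => if γ = 0 then (1 : K) else 0) ∈
      NovikovMultiSet K (convexHull ℝ (Set.range φ)) := by
    intro ψ _ c
    apply (Set.finite_singleton (0 : Γ)).subset
    rintro x ⟨hx1, -⟩
    by_contra hx0
    simp only [Set.mem_singleton_iff] at hx0
    simp [hx0] at hx1
  have hnontriv : Nontrivial ↥(NovikovMultiSet K (convexHull ℝ (Set.range φ))) := by
    refine ⟨⟨fun γ : Γ => if γ = 0 then (1 : K) else 0, hδmem⟩, 0, fun h => ?_⟩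
    have := congrFun (congrArg Subtype.val h) 0
    rw [hzero] at this
    simp at this
  haveI := hnontriv
  haveI : NoZeroDivisors ↥(NovikovMultiSet K (convexHull ℝ (Set.range φ))) := by
    constructor
    intro a b hab
    by_contra hcon
    push_neg at hcon
    obtain ⟨ha, hb⟩ := hcon
    have ha' : (a : Γ → K) ≠ 0 := fun hh => ha (Subtype.ext (hh.trans hzero.symm))
    have hb' : (b : Γ → K) ≠ 0 := fun hh => hb (Subtype.ext (hh.trans hzero.symm))
    have hab0 : ∀ γ : Γ, ∑ᶠ α : Γ, (a : Γ → K) α * (b : Γ → K) (γ - α) = 0 := by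
      intro γ
      rw [← hS.2 a b γ, hab, hzero]
      rfl
    rcases Nat.eq_zero_or_pos m with hm | hm
    · -- m = 0 : Φ is empty
      subst hm
      have hΦempty : convexHull ℝ (Set.range φ) = (∅ : Set (Γ →+ ℝ)) := by
        rw [Set.range_eq_empty, convexHull_empty]
      have hall : ∀ f : Γ → K, f ∈ NovikovMultiSet K (convexHull ℝ (Set.range φ)) := by
        intro f ψ hψ
        rw [hΦempty] at hψ
        exact absurd hψ (Set.notMem_empty _)
      rcases subsingleton_or_nontrivial Γ with hΓ | hΓ
      · -- Γ trivial : convolution is pointwise product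
        haveI : Unique Γ := ⟨⟨0⟩, fun x => Subsingleton.elim x 0⟩
        have h0 := hab0 0
        rw [finsum_unique] at h0
        have ha0 : (a : Γ → K) default ≠ 0 := by
          intro h
          apply ha'
          funext x
          simp [Subsingleton.elim x (default : Γ), h]
        have hb0 : (b : Γ → K) ((0 : Γ) - default) ≠ 0 := by
          intro h
          apply hb'
          funext x
          rw [Subsingleton.elim x ((0 : Γ) - default)]
          simpa using h
        exact mul_ne_zero ha0 hb0 h0
      · -- Γ infinite : the ring structure itself is contradictory
        haveI : IsAddTorsionFree Γ := isAddTorsionFree_iff_not_isOfFinAddOrder.2 hTF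
        obtain ⟨g, hg⟩ := exists_ne (0 : Γ)
        haveI : Infinite Γ := by
          refine Infinite.of_injective (fun n : ℤ => n • g) fun n k h => ?_
          have h' : n • g = k • g := h
          have : (n - k) • g = 0 := by rw [sub_smul, h', sub_self]
          rcases smul_eq_zero.mp this with h'' | h''
          · exact sub_eq_zero.mp h''
          · exact absurd h'' hg
        set u : ↥(NovikovMultiSet K (convexHull ℝ (Set.range φ))) :=
          ⟨fun _ => (1 : K), hall _⟩ with hu
        set v : ↥(NovikovMultiSet K (convexHull ℝ (Set.range φ))) :=
          ⟨fun γ => if γ = 0 then 0 else (-1 : K), hall _⟩ with hv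
        have hdistrib : (u + v) * u = u * u + v * u := add_mul u v u
        have h1 : ((u + v) * u).1 0 = 1 := by
          rw [hS.2]
          have heq : ∀ α : Γ, (u + v).1 α * u.1 ((0 : Γ) - α) =
              (if α = 0 then (1 : K) else 0) := by
            intro α
            rw [hS.1 u v α]
            by_cases hα : α = 0 <;> simp [hu, hv, hα]
          rw [finsum_congr heq, finsum_eq_single _ (0 : Γ) (fun x hx => by simp [hx])]
          simp
        have h2 : (u * u).1 0 = 0 := by
          rw [hS.2]
          apply finsum_of_infinite_support
          have : (Function.support fun α : Γ => u.1 α * u.1 ((0 : Γ) - α)) = Set.univ := by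
            ext x; simp [hu]
          rw [this]
          exact Set.infinite_univ
        have h3 : (v * u).1 0 = 0 := by
          rw [hS.2]
          apply finsum_of_infinite_support
          have : (Function.support fun α : Γ => v.1 α * u.1 ((0 : Γ) - α)) = {0}ᶜ := by
            ext x
            by_cases hx : x = 0 <;> simp [hu, hv, hx]
          rw [this]
          exact (Set.finite_singleton (0 : Γ)).infinite_compl
        have : (1 : K) = 0 := by
          have hfc := congrFun (congrArg Subtype.val hdistrib) 0
          rw [h1, hS.1 (u * u) (v * u) 0, h2, h3, add_zero] at hfc
          exact hfc
        exact one_ne_zero this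
    · -- m ≥ 1 : the main argument
      have hψmem : φ ⟨0, hm⟩ ∈ convexHull ℝ (Set.range φ) :=
        subset_convexHull ℝ _ (Set.mem_range_self _)
      -- build an injective hom into a linearly ordered group
      haveI : Module.Finite ℤ Γ := Module.Finite.iff_addGroup_fg.mpr ‹_›
      haveI : IsAddTorsionFree Γ := isAddTorsionFree_iff_not_isOfFinAddOrder.2 hTF
      haveI : Module.Free ℤ Γ := Module.free_of_finite_type_torsion_free'
      set B := Module.Free.chooseBasis ℤ Γ with hB
      letI : LinearOrder (Module.Free.ChooseBasisIndex ℤ Γ) :=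
        LinearOrder.lift' (Fintype.equivFin _) (Fintype.equivFin _).injective
      set e : Γ →+ Lex (Module.Free.ChooseBasisIndex ℤ Γ →₀ ℤ) :=
        AddMonoidHom.mk' (fun γ => toLex (B.repr γ)) (fun x y => by
          simp only [map_add]; rfl) with he
      have heinj : Function.Injective e := by
        intro x y hxy
        have h1 : B.repr x = B.repr y := toLex.injective hxy
        exact B.repr.injective h1
      obtain ⟨γ, hγ⟩ := novikov_key e heinj (φ ⟨0, hm⟩) a.1 b.1
        (fun c => a.2 _ hψmem c) (fun c => b.2 _ hψmem c) ha' hb'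
      exact hγ (hab0 γ)
  exact NoZeroDivisors.to_isDomain _
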